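/- For negative binomial random variables X ~ NB(p₁, r₁) and Y ~ NB(p₂, r₂) with r₁ ≥ r₂, we have X ≤_lr Y if and only if r₁(1 − p₁) ≤ r₂(1 − p₂). -/

import Mathlib

/-- Key binomial coefficient recurrence for the negative binomial pmf. -/
lemma negbin_choose_step (r x : ℕ) (hr : 1 ≤ r) :
    (x + 1) * (r + x).choose (x + 1) = (r + x) * (r + x - 1).choose x := by
  have h : r + x - 1 + 1 = r + x := by omega
  calc (x + 1) * (r + x).choose (x + 1)
      = (r + x).choose (x + 1) * (x + 1) := by ring
    _ = (r + x - 1 + 1).choose (x + 1) * (x + 1) := by rw [h]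
    _ = (r + x - 1).succ * (r + x - 1).choose x := (Nat.add_one_mul_choose_eq _ _).symm
    _ = (r + x) * (r + x - 1).choose x := by rw [Nat.succ_eq_add_one, h]

/-- For negative binomial random variables `X ~ NB(p₁,r₁)` and `Y ~ NB(p₂,r₂)` with
`r₁ ≥ r₂ ≥ 1`, we have `X ≤_lr Y` (the likelihood ratio is nonincreasing on ℕ) iff
`r₁(1-p₁) ≤ r₂(1-p₂)`. -/
theorem negbinomial_lr_iff (r₁ r₂ : ℕ) (p₁ p₂ : ℝ)
    (hr₂ : 1 ≤ r₂) (hr : r₂ ≤ r₁)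
    (hp₁ : 0 < p₁) (hp₁' : p₁ < 1) (hp₂ : 0 < p₂) (hp₂' : p₂ < 1)
    (fX fY : ℕ → ℝ)
    (hfX : ∀ x : ℕ, fX x = ((r₁ + x - 1).choose x : ℝ) * p₁ ^ r₁ * (1 - p₁) ^ x)
    (hfY : ∀ x : ℕ, fY x = ((r₂ + x - 1).choose x : ℝ) * p₂ ^ r₂ * (1 - p₂) ^ x) :
    (∀ x y : ℕ, x ≤ y → fX y / fY y ≤ fX x / fY x)
      ↔ (r₁ : ℝ) * (1 - p₁) ≤ (r₂ : ℝ) * (1 - p₂) := by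
  have hr₁ : 1 ≤ r₁ := le_trans hr₂ hr
  have ha : (0:ℝ) < 1 - p₁ := by linarith
  have hb : (0:ℝ) < 1 - p₂ := by linarith
  have hP₁ : (0:ℝ) < p₁ ^ r₁ := pow_pos hp₁ _
  have hP₂ : (0:ℝ) < p₂ ^ r₂ := pow_pos hp₂ _
  have hfYpos : ∀ x : ℕ, 0 < fY x := by
    intro x
    rw [hfY x]
    have hc : 0 < (r₂ + x - 1).choose x := Nat.choose_pos (by omega)
    positivity
  constructor
  · intro h
    have h01 := h 0 1 (by norm_num)
    rw [hfX 0, hfX 1, hfY 0, hfY 1] at h01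
    simp only [Nat.add_zero, Nat.choose_zero_right, Nat.add_sub_cancel,
      Nat.choose_one_right, pow_zero, pow_one, Nat.cast_one, one_mul, mul_one] at h01
    rw [div_le_div_iff₀ (by positivity) (by positivity)] at h01
    have hpq : (0:ℝ) < p₁ ^ r₁ * p₂ ^ r₂ := mul_pos hP₁ hP₂
    nlinarith [h01, hpq]
  · intro h
    have hab : (1 - p₁) ≤ (1 - p₂) := by
      have hr₁pos : (0:ℝ) < (r₁ : ℝ) := by exact_mod_cast hr₁
      have h2 : (r₂:ℝ) * (1 - p₂) ≤ (r₁:ℝ) * (1 - p₂) := by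
        apply mul_le_mul_of_nonneg_right _ hb.le
        exact_mod_cast hr
      exact le_of_mul_le_mul_left (le_trans h h2) hr₁pos
    apply antitone_nat_of_succ_le
    intro x
    rw [div_le_div_iff₀ (hfYpos _) (hfYpos _), hfX (x+1), hfX x, hfY (x+1), hfY x]
    have e₁ : r₁ + (x + 1) - 1 = r₁ + x := by omega
    have e₂ : r₂ + (x + 1) - 1 = r₂ + x := by omega
    rw [e₁, e₂]
    set C₁ : ℝ := ((r₁ + x - 1).choose x : ℝ) with hC₁
    set C₂ : ℝ := ((r₂ + x - 1).choose x : ℝ) with hC₂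
    set C₁' : ℝ := ((r₁ + x).choose (x+1) : ℝ) with hC₁'
    set C₂' : ℝ := ((r₂ + x).choose (x+1) : ℝ) with hC₂'
    have h1 : ((x:ℝ) + 1) * C₁' = ((r₁:ℝ) + x) * C₁ := by
      rw [hC₁', hC₁]; exact_mod_cast negbin_choose_step r₁ x hr₁
    have h2 : ((x:ℝ) + 1) * C₂' = ((r₂:ℝ) + x) * C₂ := by
      rw [hC₂', hC₂]; exact_mod_cast negbin_choose_step r₂ x hr₂
    have hC₁nn : 0 ≤ C₁ := by rw [hC₁]; positivity
    have hC₂nn : 0 ≤ C₂ := by rw [hC₂]; positivity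
    have hstep : ((r₁:ℝ) + x) * (1 - p₁) ≤ ((r₂:ℝ) + x) * (1 - p₂) := by
      have hx : (0:ℝ) ≤ (x:ℝ) := Nat.cast_nonneg x
      nlinarith [mul_le_mul_of_nonneg_left hab hx]
    have hx1 : (0:ℝ) < (x:ℝ) + 1 := by positivity
    have core : C₁' * C₂ * (1 - p₁) ≤ C₁ * C₂' * (1 - p₂) := by
      rw [← mul_le_mul_iff_right₀ hx1]
      calc ((x:ℝ) + 1) * (C₁' * C₂ * (1 - p₁))
          = (((x:ℝ) + 1) * C₁') * (C₂ * (1 - p₁)) := by ring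
        _ = (((r₁:ℝ) + x) * C₁) * (C₂ * (1 - p₁)) := by rw [h1]
        _ = (C₁ * C₂) * (((r₁:ℝ) + x) * (1 - p₁)) := by ring
        _ ≤ (C₁ * C₂) * (((r₂:ℝ) + x) * (1 - p₂)) :=
            mul_le_mul_of_nonneg_left hstep (mul_nonneg hC₁nn hC₂nn)
        _ = (((r₂:ℝ) + x) * C₂) * (C₁ * (1 - p₂)) := by ring
        _ = (((x:ℝ) + 1) * C₂') * (C₁ * (1 - p₂)) := by rw [h2]
        _ = ((x:ℝ) + 1) * (C₁ * C₂' * (1 - p₂)) := by ring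
    have hQ : (0:ℝ) ≤ p₁ ^ r₁ * p₂ ^ r₂ * (1 - p₁) ^ x * (1 - p₂) ^ x := by positivity
    calc C₁' * p₁ ^ r₁ * (1 - p₁) ^ (x+1) * (C₂ * p₂ ^ r₂ * (1 - p₂) ^ x)
        = (C₁' * C₂ * (1 - p₁)) * (p₁ ^ r₁ * p₂ ^ r₂ * (1 - p₁) ^ x * (1 - p₂) ^ x) := by
          ring
      _ ≤ (C₁ * C₂' * (1 - p₂)) * (p₁ ^ r₁ * p₂ ^ r₂ * (1 - p₁) ^ x * (1 - p₂) ^ x) :=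
          mul_le_mul_of_nonneg_right core hQ
      _ = C₁ * p₁ ^ r₁ * (1 - p₁) ^ x * (C₂' * p₂ ^ r₂ * (1 - p₂) ^ (x+1)) := by ring
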